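/- (Closure under strict rules.) Let Δ = (𝒜, 𝒞, ⪯) be a well-defined SAF or well-defined c-SAF with ⪯ reasonable, and let E be an att-complete extension of Δ. Then {Conc(A) : A ∈ E} = Cl_Rs({Conc(A) : A ∈ E}). -/

import Mathlib

namespace ASPIC

/-- An inference rule over the language `L`: a list of antecedents and a consequent. -/
structure InfRule (L : Type) where
  ants : List L
  cons : L

/-- An ASPIC+ argumentation system: a contrariness function, disjoint sets of strict
and defeasible inference rules, and a naming function for (defeasible) rules;
every formula has at least one contradictory. -/
structure ArgSystem (L : Type) where
  contr : L → Set L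
  Rs : Set (InfRule L)
  Rd : Set (InfRule L)
  nm : InfRule L → L
  hdisj : Rs ∩ Rd = ∅
  hcontrad : ∀ φ : L, ∃ ψ : L, ψ ∈ contr φ ∧ φ ∈ contr ψ

/-- A knowledge base: disjoint axioms `Kn` and ordinary premises `Kp`. -/
structure KB (L : Type) where
  Kn : Set L
  Kp : Set L
  hdisj : Kn ∩ Kp = ∅

/-- Argument trees: a premise, or the application of an inference rule to a list of
sub-arguments.  (All such trees are finite.) -/
inductive Arg (L : Type) : Type where
  | prem : L → Arg L
  | app : List (Arg L) → InfRule L → Arg L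

namespace Arg

variable {L : Type}

/-- The conclusion of an argument. -/
def conc : Arg L → L
  | prem φ => φ
  | app _ r => r.cons

/-- The top rule of an argument (none for premises). -/
def topRule : Arg L → Option (InfRule L)
  | prem _ => none
  | app _ r => some r

mutual
  /-- The premises of an argument. -/
  def premises : Arg L → Set L
    | prem φ => {φ}
    | app l _ => premisesL l
  def premisesL : List (Arg L) → Set L
    | [] => ∅
    | a :: as => premises a ∪ premisesL as
end

mutual
  /-- The sub-arguments of an argument (including itself). -/
  def subs : Arg L → Set (Arg L)
    | prem φ => {Arg.prem φ}
    | app l r => subsL l ∪ {Arg.app l r}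
  def subsL : List (Arg L) → Set (Arg L)
    | [] => ∅
    | a :: as => subs a ∪ subsL as
end

mutual
  /-- The rules occurring in an argument. -/
  def rules : Arg L → Set (InfRule L)
    | prem _ => ∅
    | app l r => rulesL l ∪ {r}
  def rulesL : List (Arg L) → Set (InfRule L)
    | [] => ∅
    | a :: as => rules a ∪ rulesL as
end

mutual
  /-- The last defeasible rules of an argument (relative to the set `Rd` of
  defeasible rules). -/
  def lastDefRules (Rd : Set (InfRule L)) : Arg L → Set (InfRule L)
    | prem _ => ∅
    | app l r =>
        let rest := lastDefRulesL Rd l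
        {x | (r ∈ Rd ∧ x = r) ∨ (r ∉ Rd ∧ x ∈ rest)}
  def lastDefRulesL (Rd : Set (InfRule L)) : List (Arg L) → Set (InfRule L)
    | [] => ∅
    | a :: as => lastDefRules Rd a ∪ lastDefRulesL Rd as
end

end Arg

variable {L : Type}

/-- Well-formed arguments on the basis of an argumentation theory `(AS, K)`. -/
inductive IsArg (AS : ArgSystem L) (K : KB L) : Arg L → Prop where
  | prem {φ : L} : φ ∈ K.Kn ∪ K.Kp → IsArg AS K (.prem φ)
  | app {l : List (Arg L)} {r : InfRule L} :
      (∀ a ∈ l, IsArg AS K a) →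
      r ∈ AS.Rs ∪ AS.Rd →
      l.map Arg.conc = r.ants →
      IsArg AS K (.app l r)

/-- The defeasible rules of an argument. -/
def defRules (AS : ArgSystem L) (A : Arg L) : Set (InfRule L) := A.rules ∩ AS.Rd
/-- The strict rules of an argument. -/
def stRules (AS : ArgSystem L) (A : Arg L) : Set (InfRule L) := A.rules ∩ AS.Rs
/-- The ordinary premises of an argument. -/
def premP (K : KB L) (A : Arg L) : Set L := A.premises ∩ K.Kp
/-- The axiom premises of an argument. -/
def premN (K : KB L) (A : Arg L) : Set L := A.premises ∩ K.Kn
/-- An argument is strict if it uses no defeasible rules. -/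
def strictArg (AS : ArgSystem L) (A : Arg L) : Prop := defRules AS A = ∅
/-- An argument is firm if all its premises are axioms. -/
def firmArg (K : KB L) (A : Arg L) : Prop := A.premises ⊆ K.Kn

/-- `φ` is a contrary of `ψ`. -/
def contrary (AS : ArgSystem L) (φ ψ : L) : Prop := φ ∈ AS.contr ψ ∧ ψ ∉ AS.contr φ
/-- `φ` and `ψ` are contradictories of each other. -/
def contrad (AS : ArgSystem L) (φ ψ : L) : Prop := φ ∈ AS.contr ψ ∧ ψ ∈ AS.contr φ

/-- Strict derivability: `SDer AS S φ` iff there is a strict argument for `φ` all of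
whose premises lie in `S` (`S ⊢ φ`). -/
inductive SDer (AS : ArgSystem L) (S : Set L) : L → Prop where
  | prem {φ : L} : φ ∈ S → SDer AS S φ
  | rule {r : InfRule L} : r ∈ AS.Rs → (∀ ψ ∈ r.ants, SDer AS S ψ) → SDer AS S r.cons

/-- `S` is c-consistent: for no pair of contradictories are both strictly derivable. -/
def CCons (AS : ArgSystem L) (S : Set L) : Prop :=
  ∀ φ ψ : L, contrad AS φ ψ → ¬ (SDer AS S φ ∧ SDer AS S ψ)

/-- `S` is minimally c-inconsistent. -/
def MinCIncons (AS : ArgSystem L) (S : Set L) : Prop :=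
  ¬ CCons AS S ∧ ∀ S' ⊂ S, CCons AS S'

/-- Closure under strict rules. -/
inductive ClRs (AS : ArgSystem L) (S : Set L) : L → Prop where
  | base {φ : L} : φ ∈ S → ClRs AS S φ
  | step {r : InfRule L} : r ∈ AS.Rs → (∀ ψ ∈ r.ants, ClRs AS S ψ) → ClRs AS S r.cons

/-- Direct consistency of a set of formulas. -/
def Consistent (AS : ArgSystem L) (S : Set L) : Prop :=
  ¬ ∃ φ ψ : L, φ ∈ S ∧ ψ ∈ S ∧ ψ ∈ AS.contr φ

/-- The argumentation theory is closed under contraposition. -/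
def ContraClosed (AS : ArgSystem L) : Prop :=
  ∀ (S : Set L) (s : L), s ∈ S → ∀ φ : L, SDer AS S φ →
    ∀ nφ : L, contrad AS φ nφ →
      ∃ ns : L, contrad AS s ns ∧ SDer AS ((S \ {s}) ∪ {nφ}) ns

/-- The argumentation theory is closed under transposition. -/
def TransClosed (AS : ArgSystem L) : Prop :=
  ∀ r ∈ AS.Rs, ∀ i : Fin r.ants.length, ∀ nψ : L, contrad AS r.cons nψ →
    ∃ nφ : L, contrad AS (r.ants.get i) nφ ∧
      ({ ants := r.ants.set i.1 nψ, cons := nφ } : InfRule L) ∈ AS.Rs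

/-- Axiom consistency: the strict closure of the axioms is consistent. -/
def AxiomConsistent (AS : ArgSystem L) (K : KB L) : Prop :=
  Consistent AS {φ | ClRs AS K.Kn φ}

/-- c-classicality. -/
def CClassical (AS : ArgSystem L) : Prop :=
  ∀ S : Set L, MinCIncons AS S → ∀ φ ∈ S,
    ∃ nφ : L, contrad AS φ nφ ∧ SDer AS (S \ {φ}) nφ

/-- Well-formedness: contraried formulas are neither axioms nor consequents of strict rules. -/
def WellFormed (AS : ArgSystem L) (K : KB L) : Prop :=
  ∀ φ ψ : L, contrary AS φ ψ → ψ ∉ K.Kn ∧ ∀ r ∈ AS.Rs, r.cons ≠ ψ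

/-- Well-definedness for SAFs. -/
def WellDefinedSAF (AS : ArgSystem L) (K : KB L) : Prop :=
  AxiomConsistent AS K ∧ WellFormed AS K ∧ (ContraClosed AS ∨ TransClosed AS)

/-- Well-definedness for c-SAFs. -/
def WellDefinedCSAF (AS : ArgSystem L) (K : KB L) : Prop :=
  WellDefinedSAF AS K ∧ CClassical AS

/-- The arguments of the SAF defined by `(AS,K)`: all (finite) arguments. -/
def ArgsSAF (AS : ArgSystem L) (K : KB L) : Set (Arg L) := {A | IsArg AS K A}

/-- The arguments of the c-SAF defined by `(AS,K)`: all (finite) c-consistent arguments. -/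
def ArgsCSAF (AS : ArgSystem L) (K : KB L) : Set (Arg L) :=
  {A | IsArg AS K A ∧ CCons AS A.premises}

/-- `A` undercuts `B` on `B'`. -/
def undercutsOn (AS : ArgSystem L) (A B B' : Arg L) : Prop :=
  B' ∈ B.subs ∧ ∃ r ∈ AS.Rd, B'.topRule = some r ∧ A.conc ∈ AS.contr (AS.nm r)

/-- `A` rebuts `B` on `B'`. -/
def rebutsOn (AS : ArgSystem L) (A B B' : Arg L) : Prop :=
  B' ∈ B.subs ∧ ∃ r ∈ AS.Rd, B'.topRule = some r ∧ A.conc ∈ AS.contr B'.conc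

/-- `A` undermines `B` on `B'`. -/
def underminesOn (AS : ArgSystem L) (K : KB L) (A B B' : Arg L) : Prop :=
  B' ∈ B.subs ∧ ∃ φ ∈ K.Kp, B' = Arg.prem φ ∧ A.conc ∈ AS.contr φ

/-- `A` attacks `B` on `B'`. -/
def attacksOn (AS : ArgSystem L) (K : KB L) (A B B' : Arg L) : Prop :=
  undercutsOn AS A B B' ∨ rebutsOn AS A B B' ∨ underminesOn AS K A B B'

/-- `A` attacks `B`. -/
def attacks (AS : ArgSystem L) (K : KB L) (A B : Arg L) : Prop :=
  ∃ B', attacksOn AS K A B B'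

/-- Preference-independent attacks: undercuts, contrary-rebuts and contrary-undermines. -/
def prefIndepOn (AS : ArgSystem L) (K : KB L) (A B B' : Arg L) : Prop :=
  undercutsOn AS A B B' ∨
  (rebutsOn AS A B B' ∧ contrary AS A.conc B'.conc) ∨
  (underminesOn AS K A B B' ∧ contrary AS A.conc B'.conc)

/-- Preference-dependent attacks. -/
def prefDepOn (AS : ArgSystem L) (K : KB L) (A B B' : Arg L) : Prop :=
  attacksOn AS K A B B' ∧ ¬ prefIndepOn AS K A B B'

/-- The strict counterpart `≺` of an ordering `⪯`. -/
def sprec (pre : Arg L → Arg L → Prop) (X Y : Arg L) : Prop := pre X Y ∧ ¬ pre Y X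

/-- `A` defeats `B`, relative to a strict preference relation `slt` (`≺`). -/
def defeats (AS : ArgSystem L) (K : KB L) (slt : Arg L → Arg L → Prop) (A B : Arg L) : Prop :=
  ∃ B', prefIndepOn AS K A B B' ∨ (prefDepOn AS K A B B' ∧ ¬ slt A B')

/-- `A` is a strict continuation of the set of arguments `Γ`. -/
def StrictCont (AS : ArgSystem L) (K : KB L) (A : Arg L) (Γ : Set (Arg L)) : Prop :=
  premP K A = (⋃ B ∈ Γ, premP K B) ∧
  defRules AS A = (⋃ B ∈ Γ, defRules AS B) ∧
  (⋃ B ∈ Γ, stRules AS B) ⊆ stRules AS A ∧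
  (⋃ B ∈ Γ, premN K B) ⊆ premN K A

/-- `B'` has a fallible top: a defeasible top rule, or an ordinary premise. -/
def fallibleTop (AS : ArgSystem L) (K : KB L) (B' : Arg L) : Prop :=
  (∃ r ∈ AS.Rd, B'.topRule = some r) ∨ (∃ φ ∈ K.Kp, B' = Arg.prem φ)

/-- `M(B)`: the maximal fallible sub-arguments of `B`. -/
def MSet (AS : ArgSystem L) (K : KB L) (B : Arg L) : Set (Arg L) :=
  {B' | B' ∈ B.subs ∧ fallibleTop AS K B' ∧
    ¬ ∃ B'', B'' ∈ B.subs ∧ B'' ≠ B ∧ B'' ≠ B' ∧ fallibleTop AS K B'' ∧ B' ∈ B''.subs}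

/-- A reasonable argument ordering. -/
def Reasonable (AS : ArgSystem L) (K : KB L) (pre : Arg L → Arg L → Prop) : Prop :=
  (∀ A B : Arg L, strictArg AS A → firmArg K A →
      (¬ firmArg K B ∨ ¬ strictArg AS B) → sprec pre B A) ∧
  (∀ A B : Arg L, strictArg AS B → firmArg K B → ¬ sprec pre B A) ∧
  (∀ A A' B : Arg L, StrictCont AS K A' {A} →
      (¬ sprec pre A B → ¬ sprec pre A' B) ∧ (¬ sprec pre B A → ¬ sprec pre B A')) ∧
  (∀ s : Finset (Arg L), s.Nonempty → ∀ f : Arg L → Arg L,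
      (∀ C ∈ s, StrictCont AS K (f C) ((↑s : Set (Arg L)) \ {C})) →
      ¬ (∀ C ∈ s, sprec pre (f C) C))

/-- Conflict-freeness of `S` with respect to a relation (attack or defeat). -/
def CFwrt (rel : Arg L → Arg L → Prop) (S : Set (Arg L)) : Prop :=
  ∀ X ∈ S, ∀ Y ∈ S, ¬ rel X Y

/-- `A` is acceptable with respect to `S` (all its defeaters in `𝒜` are defeated from `S`). -/
def Acceptable (𝒜 : Set (Arg L)) (df : Arg L → Arg L → Prop)
    (S : Set (Arg L)) (A : Arg L) : Prop :=
  ∀ B ∈ 𝒜, df B A → ∃ C ∈ S, df C B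

/-- Admissible sets, relative to a conflict-freeness notion `cf` and defeat relation `df`. -/
def Admissible (𝒜 : Set (Arg L)) (cf : Set (Arg L) → Prop)
    (df : Arg L → Arg L → Prop) (S : Set (Arg L)) : Prop :=
  S ⊆ 𝒜 ∧ cf S ∧ ∀ A ∈ S, Acceptable 𝒜 df S A

/-- Complete extensions. -/
def Complete (𝒜 : Set (Arg L)) (cf : Set (Arg L) → Prop)
    (df : Arg L → Arg L → Prop) (S : Set (Arg L)) : Prop :=
  Admissible 𝒜 cf df S ∧ ∀ A ∈ 𝒜, Acceptable 𝒜 df S A → A ∈ S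

/-- Preferred extensions: ⊆-maximal complete extensions. -/
def Preferred (𝒜 : Set (Arg L)) (cf : Set (Arg L) → Prop)
    (df : Arg L → Arg L → Prop) (S : Set (Arg L)) : Prop :=
  Complete 𝒜 cf df S ∧ ∀ S', Complete 𝒜 cf df S' → S ⊆ S' → S' = S

/-- The grounded extension: the ⊆-minimal complete extension. -/
def Grounded (𝒜 : Set (Arg L)) (cf : Set (Arg L) → Prop)
    (df : Arg L → Arg L → Prop) (S : Set (Arg L)) : Prop :=
  Complete 𝒜 cf df S ∧ ∀ S', Complete 𝒜 cf df S' → S ⊆ S'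

/-- Stable extensions. -/
def Stable (𝒜 : Set (Arg L)) (cf : Set (Arg L) → Prop)
    (df : Arg L → Arg L → Prop) (S : Set (Arg L)) : Prop :=
  Preferred 𝒜 cf df S ∧ ∀ B ∈ 𝒜, B ∉ S → ∃ A ∈ S, df A B

/-- The set of antecedents of a rule. -/
def antsSet {L : Type} (r : InfRule L) : Set L := {φ | φ ∈ r.ants}

end ASPIC
namespace ASPIC
variable {L : Type}

lemma mem_premisesL {φ : L} : ∀ {l : List (Arg L)}, φ ∈ Arg.premisesL l ↔ ∃ a ∈ l, φ ∈ a.premises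
  | [] => by simp [Arg.premisesL]
  | a :: as => by simp [Arg.premisesL, Set.mem_union, @mem_premisesL φ as]

lemma mem_subsL {B : Arg L} : ∀ {l : List (Arg L)}, B ∈ Arg.subsL l ↔ ∃ a ∈ l, B ∈ a.subs
  | [] => by simp [Arg.subsL]
  | a :: as => by simp [Arg.subsL, Set.mem_union, @mem_subsL B as]

lemma mem_rulesL {r : InfRule L} : ∀ {l : List (Arg L)}, r ∈ Arg.rulesL l ↔ ∃ a ∈ l, r ∈ a.rules
  | [] => by simp [Arg.rulesL]
  | a :: as => by simp [Arg.rulesL, Set.mem_union, @mem_rulesL r as]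

lemma sizeOf_lt_app {a : Arg L} {l : List (Arg L)} {r : InfRule L} (h : a ∈ l) :
    sizeOf a < sizeOf (Arg.app l r) := by
  have := List.sizeOf_lt_of_mem h
  simp only [Arg.app.sizeOf_spec]
  omega

lemma arg_ind (P : Arg L → Prop) (h1 : ∀ φ, P (.prem φ))
    (h2 : ∀ l r, (∀ a ∈ l, P a) → P (.app l r)) : ∀ A, P A := by
  have key : ∀ n (A : Arg L), sizeOf A ≤ n → P A := by
    intro n
    induction n with
    | zero => intro A hA; cases A with
      | prem φ => exact absurd hA (by simp [Arg.prem.sizeOf_spec])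
      | app l r => exact absurd hA (by simp [Arg.app.sizeOf_spec])
    | succ n ih =>
      intro A hA
      cases A with
      | prem φ => exact h1 φ
      | app l r => exact h2 l r fun a ha => ih a (by have := sizeOf_lt_app (r := r) ha; omega)
  exact fun A => key (sizeOf A) A le_rfl

lemma prem_mem_subs : ∀ {A : Arg L} {φ : L}, φ ∈ A.premises → Arg.prem φ ∈ A.subs := by
  have : ∀ A : Arg L, ∀ φ : L, φ ∈ A.premises → Arg.prem φ ∈ A.subs := by
    refine arg_ind _ ?_ ?_
    · intro ψ φ h; simp_all [Arg.premises, Arg.subs]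
    · intro l r ih φ h
      have : φ ∈ Arg.premisesL l := h
      obtain ⟨a, ha, hφ⟩ := mem_premisesL.mp this
      have : Arg.prem φ ∈ Arg.subsL l := mem_subsL.mpr ⟨a, ha, ih a ha φ hφ⟩
      exact Set.mem_union_left _ this
  exact fun {A φ} h => this A φ h

lemma mem_premises_of_prem_sub : ∀ {A : Arg L} {φ : L}, Arg.prem φ ∈ A.subs → φ ∈ A.premises := by
  have : ∀ A : Arg L, ∀ φ : L, Arg.prem φ ∈ A.subs → φ ∈ A.premises := by
    refine arg_ind _ ?_ ?_
    · intro ψ φ h; simp_all [Arg.premises, Arg.subs]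
    · intro l r ih φ h
      rcases (Set.mem_union _ _ _).mp h with h | h
      · obtain ⟨a, ha, hφ⟩ := mem_subsL.mp h
        exact mem_premisesL.mpr ⟨a, ha, ih a ha φ hφ⟩
      · simp at h
  exact fun {A φ} h => this A φ h

lemma rules_of_sub : ∀ {A B : Arg L}, B ∈ A.subs → B.rules ⊆ A.rules := by
  have : ∀ A : Arg L, ∀ B : Arg L, B ∈ A.subs → B.rules ⊆ A.rules := by
    refine arg_ind _ ?_ ?_
    · intro ψ B h; simp [Arg.subs] at h; subst h; exact subset_rfl
    · intro l r ih B h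
      rcases (Set.mem_union _ _ _).mp h with h | h
      · obtain ⟨a, ha, hB⟩ := mem_subsL.mp h
        intro x hx
        exact Set.mem_union_left _ (mem_rulesL.mpr ⟨a, ha, ih a ha B hB hx⟩)
      · simp at h; subst h; exact subset_rfl
  exact fun {A B} h => this A B h

lemma topRule_mem_rules {A : Arg L} {r : InfRule L} (h : A.topRule = some r) : r ∈ A.rules := by
  cases A with
  | prem φ => simp [Arg.topRule] at h
  | app l r' => simp [Arg.topRule] at h; subst h; exact Set.mem_union_right _ rfl
lemma sder_mono {AS : ArgSystem L} {S S' : Set L} (hss : S ⊆ S') {φ : L}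
    (h : SDer AS S φ) : SDer AS S' φ := by
  induction h with
  | prem h => exact .prem (hss h)
  | rule hr _ ih => exact .rule hr ih

lemma ccons_mono {AS : ArgSystem L} {S S' : Set L} (hss : S ⊆ S') (h : CCons AS S') :
    CCons AS S := fun φ ψ hc ⟨h1, h2⟩ => h φ ψ hc ⟨sder_mono hss h1, sder_mono hss h2⟩

lemma list_choice {xs : List L} {Q : Arg L → Prop}
    (h : ∀ ψ ∈ xs, ∃ a : Arg L, Arg.conc a = ψ ∧ Q a) :
    ∃ l : List (Arg L), l.map Arg.conc = xs ∧ ∀ a ∈ l, Q a := by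
  induction xs with
  | nil => exact ⟨[], rfl, by simp⟩
  | cons x xs ih =>
    obtain ⟨a, hc, hq⟩ := h x (by simp)
    obtain ⟨l, hm, hl⟩ := ih fun ψ hψ => h ψ (by simp [hψ])
    refine ⟨a :: l, by simp [hc, hm], ?_⟩
    intro b hb
    rcases List.mem_cons.mp hb with rfl | hb
    · exact hq
    · exact hl b hb

lemma sder_to_arg (AS : ArgSystem L) (K : KB L) {S : Set L} (hS : S ⊆ K.Kn ∪ K.Kp) {φ : L}
    (h : SDer AS S φ) :
    ∃ A : Arg L, IsArg AS K A ∧ A.conc = φ ∧ A.premises ⊆ S ∧ A.rules ⊆ AS.Rs ∧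
      SDer AS A.premises φ := by
  induction h with
  | prem hφ =>
    refine ⟨.prem _, .prem (hS hφ), rfl, ?_, by simp [Arg.rules], .prem ?_⟩
    · simpa [Arg.premises] using hφ
    · simp [Arg.premises]
  | rule hr hants ih =>
    obtain ⟨l, hmap, hl⟩ := list_choice (Q := fun a => IsArg AS K a ∧ a.premises ⊆ S ∧
        a.rules ⊆ AS.Rs ∧ SDer AS a.premises a.conc)
      (fun ψ hψ => by obtain ⟨A, h1, h2, h3, h4, h5⟩ := ih ψ hψ;
                      exact ⟨A, h2, h1, h3, h4, h2 ▸ h5⟩)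
    refine ⟨.app l _, .app (fun a ha => (hl a ha).1) (Or.inl hr) hmap, rfl, ?_, ?_, ?_⟩
    · intro x hx
      obtain ⟨a, ha, hxa⟩ := mem_premisesL.mp hx
      exact (hl a ha).2.1 hxa
    · intro x hx
      rcases (Set.mem_union _ _ _).mp hx with hx | hx
      · obtain ⟨a, ha, hxa⟩ := mem_rulesL.mp hx
        exact (hl a ha).2.2.1 hxa
      · simp at hx; subst hx; exact hr
    · refine .rule hr ?_
      intro ψ hψ
      rw [← hmap] at hψ
      obtain ⟨a, ha, rfl⟩ := List.mem_map.mp hψ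
      exact sder_mono (fun x hx => mem_premisesL.mpr ⟨a, ha, hx⟩) (hl a ha).2.2.2

lemma sder_finite {AS : ArgSystem L} {S : Set L} {φ : L} (h : SDer AS S φ) :
    ∃ F ⊆ S, F.Finite ∧ SDer AS F φ := by
  induction h with
  | @prem φ' hφ => exact ⟨{φ'}, by simpa using hφ, Set.finite_singleton φ', .prem rfl⟩
  | rule hr hants ih =>
    have : ∀ xs : List L, (∀ ψ ∈ xs, ∃ F ⊆ S, F.Finite ∧ SDer AS F ψ) →
        ∃ F ⊆ S, F.Finite ∧ ∀ ψ ∈ xs, SDer AS F ψ := by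
      intro xs hxs
      induction xs with
      | nil => exact ⟨∅, Set.empty_subset _, Set.finite_empty, by simp⟩
      | cons x xs ihx =>
        obtain ⟨F1, hF1, hf1, hs1⟩ := hxs x (by simp)
        obtain ⟨F2, hF2, hf2, hs2⟩ := ihx fun ψ hψ => hxs ψ (by simp [hψ])
        refine ⟨F1 ∪ F2, Set.union_subset hF1 hF2, hf1.union hf2, ?_⟩
        intro ψ hψ
        rcases List.mem_cons.mp hψ with rfl | hψ
        · exact sder_mono Set.subset_union_left hs1
        · exact sder_mono Set.subset_union_right (hs2 ψ hψ)
    obtain ⟨F, hF, hf, hs⟩ := this _ ih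
    exact ⟨F, hF, hf, .rule hr hs⟩

lemma exists_minCIncons (AS : ArgSystem L) {U : Set L} (h : ¬ CCons AS U) :
    ∃ T ⊆ U, T.Finite ∧ MinCIncons AS T := by
  unfold CCons at h
  push_neg at h
  obtain ⟨φ, ψ, hc, h1, h2⟩ := h
  obtain ⟨F1, hF1, hf1, hs1⟩ := sder_finite h1
  obtain ⟨F2, hF2, hf2, hs2⟩ := sder_finite h2
  have hF : ¬ CCons AS (F1 ∪ F2) := fun hcc => hcc φ ψ hc
    ⟨sder_mono Set.subset_union_left hs1, sder_mono Set.subset_union_right hs2⟩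
  have key : ∀ n (F : Set L), F.Finite → F.ncard ≤ n → ¬ CCons AS F →
      ∃ T ⊆ F, T.Finite ∧ MinCIncons AS T := by
    intro n
    induction n with
    | zero =>
      intro F hfin hcard hncc
      have : F = ∅ := by
        rw [← Set.ncard_eq_zero hfin]; omega
      exact ⟨F, subset_rfl, hfin, hncc, fun S' hS' => (((this ▸ hS').2 (Set.empty_subset S')).elim)⟩
    | succ n ih =>
      intro F hfin hcard hncc
      by_cases hall : ∀ S' ⊂ F, CCons AS S'
      · exact ⟨F, subset_rfl, hfin, hncc, hall⟩
      · push_neg at hall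
        obtain ⟨S', hS', hnS'⟩ := hall
        have hS'fin : S'.Finite := hfin.subset hS'.subset
        have : S'.ncard ≤ n := by
          have := Set.ncard_lt_ncard hS' hfin
          omega
        obtain ⟨T, hT, h1, h2⟩ := ih S' hS'fin this hnS'
        exact ⟨T, hT.trans hS'.subset, h1, h2⟩
  obtain ⟨T, hT, h1, h2⟩ := key (F1 ∪ F2).ncard _ (hf1.union hf2) le_rfl hF
  exact ⟨T, hT.trans (Set.union_subset hF1 hF2), h1, h2⟩

lemma isArg_premises {AS : ArgSystem L} {K : KB L} {A : Arg L} (h : IsArg AS K A) :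
    A.premises ⊆ K.Kn ∪ K.Kp := by
  induction h with
  | prem h => intro x hx; simp [Arg.premises] at hx; subst hx; exact h
  | app hl hr hmap ih =>
    intro x hx
    obtain ⟨a, ha, hxa⟩ := mem_premisesL.mp hx
    exact ih a ha hxa

lemma sder_kn {AS : ArgSystem L} {K : KB L} {T : Set L} (hT : T ⊆ K.Kn) {φ : L}
    (h : SDer AS T φ) : ClRs AS K.Kn φ := by
  induction h with
  | prem h => exact .base (hT h)
  | rule hr _ ih => exact .step hr ih
lemma attacksOn_sub {AS : ArgSystem L} {K : KB L} {C B B' : Arg L}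
    (h : attacksOn AS K C B B') : B' ∈ B.subs := by
  rcases h with ⟨h, _⟩ | ⟨h, _⟩ | ⟨h, _⟩ <;> exact h

lemma attacksOn_transfer {AS : ArgSystem L} {K : KB L} {C B B2 B' : Arg L}
    (h : attacksOn AS K C B B') (h2 : B' ∈ B2.subs) : attacksOn AS K C B2 B' := by
  rcases h with ⟨_, h⟩ | ⟨_, h⟩ | ⟨_, h⟩
  · exact Or.inl ⟨h2, h⟩
  · exact Or.inr (Or.inl ⟨h2, h⟩)
  · exact Or.inr (Or.inr ⟨h2, h⟩)

lemma prefIndepOn_transfer {AS : ArgSystem L} {K : KB L} {C B B2 B' : Arg L}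
    (h : prefIndepOn AS K C B B') (h2 : B' ∈ B2.subs) : prefIndepOn AS K C B2 B' := by
  rcases h with ⟨_, h⟩ | ⟨⟨_, h⟩, hc⟩ | ⟨⟨_, h⟩, hc⟩
  · exact Or.inl ⟨h2, h⟩
  · exact Or.inr (Or.inl ⟨⟨h2, h⟩, hc⟩)
  · exact Or.inr (Or.inr ⟨⟨h2, h⟩, hc⟩)

lemma prefIndepOn_attacksOn {AS : ArgSystem L} {K : KB L} {C B B' : Arg L}
    (h : prefIndepOn AS K C B B') : attacksOn AS K C B B' := by
  rcases h with h | ⟨h, _⟩ | ⟨h, _⟩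
  · exact Or.inl h
  · exact Or.inr (Or.inl h)
  · exact Or.inr (Or.inr h)

/-- Any sub-argument on which a fully strict argument is attacked must be an
ordinary-premise undermining. -/
lemma attacksOn_strict {AS : ArgSystem L} {K : KB L} {C B B' : Arg L}
    (hstr : B.rules ⊆ AS.Rs) (h : attacksOn AS K C B B') :
    ∃ ψ ∈ K.Kp, B' = Arg.prem ψ ∧ C.conc ∈ AS.contr ψ ∧ ψ ∈ B.premises := by
  rcases h with ⟨hsub, r, hrd, htop, _⟩ | ⟨hsub, r, hrd, htop, _⟩ | ⟨hsub, ψ, hψ, heq, hc⟩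
  · have : r ∈ AS.Rs := hstr (rules_of_sub hsub (topRule_mem_rules htop))
    have : r ∈ AS.Rs ∩ AS.Rd := ⟨this, hrd⟩
    rw [AS.hdisj] at this
    exact this.elim
  · have : r ∈ AS.Rs := hstr (rules_of_sub hsub (topRule_mem_rules htop))
    have : r ∈ AS.Rs ∩ AS.Rd := ⟨this, hrd⟩
    rw [AS.hdisj] at this
    exact this.elim
  · exact ⟨ψ, hψ, heq, hc, mem_premises_of_prem_sub (heq ▸ hsub)⟩

lemma defeats_attacksOn {AS : ArgSystem L} {K : KB L} {slt : Arg L → Arg L → Prop}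
    {C B : Arg L} (h : defeats AS K slt C B) :
    ∃ B', attacksOn AS K C B B' := by
  obtain ⟨B', h | ⟨⟨h, _⟩, _⟩⟩ := h
  · exact ⟨B', prefIndepOn_attacksOn h⟩
  · exact ⟨B', h⟩
lemma extension_premises_ccons (AS : ArgSystem L) (K : KB L) (pre : Arg L → Arg L → Prop)
    (hwd : WellDefinedCSAF AS K) (hreas : Reasonable AS K pre) (E : Set (Arg L))
    (hE : Complete (ArgsCSAF AS K) (CFwrt (attacks AS K)) (defeats AS K (sprec pre)) E) :
    CCons AS {φ | ∃ A ∈ E, φ ∈ A.premises} := by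
  classical
  set W := {φ | ∃ A ∈ E, φ ∈ A.premises} with hWdef
  by_contra hncc
  obtain ⟨T, hTW, hTfin, hTmin⟩ := exists_minCIncons AS hncc
  have hEisArg : ∀ A ∈ E, IsArg AS K A := fun A hA => (hE.1.1 hA).1
  have hWsub : W ⊆ K.Kn ∪ K.Kp := by
    rintro φ ⟨A, hA, hφ⟩
    exact isArg_premises (hEisArg A hA) hφ
  -- T contains an ordinary premise
  have hTKp : ∃ χ, χ ∈ T ∧ χ ∈ K.Kp := by
    by_contra hno
    push_neg at hno
    have hTKn : T ⊆ K.Kn := by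
      intro χ hχ
      rcases hWsub (hTW hχ) with h | h
      · exact h
      · exact absurd h (hno χ hχ)
    have h1 := hTmin.1
    unfold CCons at h1; push_neg at h1
    obtain ⟨χ1, χ2, hc, hd1, hd2⟩ := h1
    exact hwd.1.1 ⟨χ1, χ2, sder_kn hTKn hd1, sder_kn hTKn hd2, hc.2⟩
  -- for each φ ∈ T, a strict argument for a contradictory of φ from exactly T \ {φ}
  have spec : ∀ φ, φ ∈ T → ∃ C : Arg L, IsArg AS K C ∧ contrad AS φ C.conc ∧
      C.premises = T \ {φ} ∧ C.rules ⊆ AS.Rs := by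
    intro φ hφ
    obtain ⟨nφ, hcd, hsd⟩ := hwd.2 T hTmin φ hφ
    have hsub : T \ {φ} ⊆ K.Kn ∪ K.Kp := fun x hx => hWsub (hTW hx.1)
    obtain ⟨C, h1, h2, h3, h4, h5⟩ := sder_to_arg AS K hsub hsd
    have hcd' : contrad AS φ C.conc := by rw [h2]; exact hcd
    have hPsub : C.premises ∪ {φ} ⊆ T :=
      Set.union_subset (h3.trans Set.diff_subset) (by simpa using hφ)
    have hncc2 : ¬ CCons AS (C.premises ∪ {φ}) := by
      intro hcc
      exact hcc φ nφ hcd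
        ⟨.prem (Set.mem_union_right _ rfl), sder_mono Set.subset_union_left h5⟩
    have hEq : C.premises ∪ {φ} = T := by
      rcases hPsub.lt_or_eq with hlt | heq
      · exact absurd (hTmin.2 _ hlt) hncc2
      · exact heq
    refine ⟨C, h1, hcd', ?_, h4⟩
    ext χ
    constructor
    · exact fun hχ => h3 hχ
    · rintro ⟨hχT, hχφ⟩
      rcases (Set.mem_union _ _ _).mp (hEq ▸ hχT : χ ∈ C.premises ∪ {φ}) with h | h
      · exact h
      · exact absurd h hχφ
  have spec' : ∀ φ : L, ∃ C : Arg L, φ ∈ T → (IsArg AS K C ∧ contrad AS φ C.conc ∧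
      C.premises = T \ {φ} ∧ C.rules ⊆ AS.Rs) := by
    intro φ
    by_cases h : φ ∈ T
    · obtain ⟨C, hC⟩ := spec φ h; exact ⟨C, fun _ => hC⟩
    · exact ⟨Arg.prem φ, fun h' => absurd h' h⟩
  choose Cf hCf using spec'
  have hTKpfin : (T ∩ K.Kp).Finite := hTfin.inter_of_left _
  set s : Finset (Arg L) := hTKpfin.toFinset.image Arg.prem with hsdef
  have hmem_s : ∀ A, A ∈ s ↔ ∃ ψ, (ψ ∈ T ∧ ψ ∈ K.Kp) ∧ Arg.prem ψ = A := by
    intro A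
    simp [hsdef, Finset.mem_image, Set.Finite.mem_toFinset, Set.mem_inter_iff]
  have hne : s.Nonempty := by
    obtain ⟨χ, hχT, hχKp⟩ := hTKp
    exact ⟨Arg.prem χ, (hmem_s _).mpr ⟨χ, ⟨hχT, hχKp⟩, rfl⟩⟩
  set f : Arg L → Arg L := fun A => match A with | .prem φ => Cf φ | x => x with hfdef
  have hsc : ∀ C ∈ s, StrictCont AS K (f C) ((↑s : Set (Arg L)) \ {C}) := by
    intro C hC
    obtain ⟨ψ, ⟨hψT, hψKp⟩, rfl⟩ := (hmem_s C).mp hC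
    obtain ⟨hIs, hcd, hprem, hrules⟩ := hCf ψ hψT
    have hfC : f (Arg.prem ψ) = Cf ψ := rfl
    rw [hfC]
    have hDim : (↑s : Set (Arg L)) \ {Arg.prem ψ} = Arg.prem '' ((T ∩ K.Kp) \ {ψ}) := by
      ext B
      constructor
      · rintro ⟨hBs, hBne⟩
        obtain ⟨ρ, hρ, rfl⟩ := (hmem_s B).mp hBs
        exact ⟨ρ, ⟨⟨hρ.1, hρ.2⟩, fun h => hBne (by simp at h; simp [h])⟩, rfl⟩
      · rintro ⟨ρ, ⟨hρ, hρne⟩, rfl⟩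
        refine ⟨(hmem_s _).mpr ⟨ρ, ⟨hρ.1, hρ.2⟩, rfl⟩, ?_⟩
        intro h
        exact hρne (by simpa using Arg.prem.inj (by simpa using h))
    rw [hDim]
    have hpremP : ∀ ρ ∈ (T ∩ K.Kp) \ {ψ}, premP K (Arg.prem ρ) = {ρ} := by
      intro ρ hρ
      have : ({ρ} : Set L) ∩ K.Kp = {ρ} :=
        Set.inter_eq_self_of_subset_left (Set.singleton_subset_iff.mpr hρ.1.2)
      simpa [premP, Arg.premises] using this
    have hpremN : ∀ ρ ∈ (T ∩ K.Kp) \ {ψ}, premN K (Arg.prem ρ) = ∅ := by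
      intro ρ hρ
      have : ρ ∉ K.Kn := fun h => by
        have : ρ ∈ K.Kn ∩ K.Kp := ⟨h, hρ.1.2⟩
        rw [K.hdisj] at this
        exact this
      simp [premN, Arg.premises, Set.singleton_inter_eq_empty.mpr this]
    have hrul : ∀ ρ : L, Arg.rules (Arg.prem ρ) = ∅ := fun ρ => rfl
    refine ⟨?_, ?_, ?_, ?_⟩
    · -- premP equality
      rw [Set.biUnion_image]
      ext χ
      simp only [Set.mem_iUnion, exists_prop]
      constructor
      · intro hχ
        have hχ' : χ ∈ (T \ {ψ}) ∩ K.Kp := by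
          have h1 : χ ∈ (Cf ψ).premises := hχ.1
          rw [hprem] at h1
          exact ⟨h1, hχ.2⟩
        refine ⟨χ, ⟨⟨hχ'.1.1, hχ'.2⟩, hχ'.1.2⟩, ?_⟩
        rw [hpremP χ ⟨⟨hχ'.1.1, hχ'.2⟩, hχ'.1.2⟩]
        exact rfl
      · rintro ⟨ρ, hρ, hχρ⟩
        rw [hpremP ρ hρ] at hχρ
        have : χ = ρ := hχρ
        subst this
        refine ⟨?_, hρ.1.2⟩
        rw [hprem]
        exact ⟨hρ.1.1, hρ.2⟩
    · -- defRules equality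
      have h1 : defRules AS (Cf ψ) = ∅ := by
        ext r
        simp only [defRules, Set.mem_inter_iff, Set.mem_empty_iff_false, iff_false, not_and]
        intro hr hrd
        have : r ∈ AS.Rs ∩ AS.Rd := ⟨hrules hr, hrd⟩
        rw [AS.hdisj] at this
        exact this
      rw [h1, Set.biUnion_image]
      ext r
      simp [defRules, hrul]
    · -- stRules
      rw [Set.biUnion_image]
      intro r hr
      simp only [Set.mem_iUnion, exists_prop] at hr
      obtain ⟨ρ, _, hrρ⟩ := hr
      simp [stRules, hrul] at hrρ
    · -- premN
      rw [Set.biUnion_image]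
      intro χ hχ
      simp only [Set.mem_iUnion, exists_prop] at hχ
      obtain ⟨ρ, hρ, hχρ⟩ := hχ
      rw [hpremN ρ hρ] at hχρ
      exact hχρ.elim
  have hnall := hreas.2.2.2 s hne f hsc
  push_neg at hnall
  obtain ⟨C0, hC0s, hnsp⟩ := hnall
  obtain ⟨ψ, ⟨hψT, hψKp⟩, rfl⟩ := (hmem_s C0).mp hC0s
  have hfC : f (Arg.prem ψ) = Cf ψ := rfl
  rw [hfC] at hnsp
  obtain ⟨hIs, hcd, hprem, hrules⟩ := hCf ψ hψT
  obtain ⟨A, hAE, hψprem⟩ := hTW hψT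
  have hconc : (Cf ψ).conc ∈ AS.contr ψ := hcd.2
  have hundermine : underminesOn AS K (Cf ψ) A (Arg.prem ψ) :=
    ⟨prem_mem_subs hψprem, ψ, hψKp, rfl, hconc⟩
  have hnotindep : ¬ prefIndepOn AS K (Cf ψ) A (Arg.prem ψ) := by
    rintro (⟨_, r, hrd, htop, _⟩ | ⟨⟨_, r, hrd, htop, _⟩, _⟩ | ⟨_, hcon⟩)
    · simp [Arg.topRule] at htop
    · simp [Arg.topRule] at htop
    · exact hcon.2 hcd.1
  have hdefeat : defeats AS K (sprec pre) (Cf ψ) A :=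
    ⟨Arg.prem ψ, Or.inr ⟨⟨Or.inr (Or.inr hundermine), hnotindep⟩, hnsp⟩⟩
  have hCmem : Cf ψ ∈ ArgsCSAF AS K := by
    refine ⟨hIs, ?_⟩
    rw [hprem]
    exact hTmin.2 _ ((Set.ssubset_iff_of_subset Set.diff_subset).mpr
      ⟨ψ, hψT, fun h => h.2 rfl⟩)
  obtain ⟨D, hDE, hDdef⟩ := hE.1.2.2 A hAE (Cf ψ) hCmem hdefeat
  obtain ⟨C', hatt⟩ := defeats_attacksOn hDdef
  obtain ⟨ρ, hρKp, hC'eq, hDc, hρprem⟩ := attacksOn_strict hrules hatt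
  rw [hprem] at hρprem
  obtain ⟨A', hA'E, hρA'⟩ := hTW hρprem.1
  exact hE.1.2.1 D hDE A' hA'E
    ⟨Arg.prem ρ, Or.inr (Or.inr ⟨prem_mem_subs hρA', ρ, hρKp, rfl, hDc⟩)⟩


/-- Theorem: closure under strict rules: in a well-defined (c-)SAF with a
reasonable ordering, the conclusions of an att-complete extension are closed under strict
rules: `{Conc(A) : A ∈ E} = Cl_Rs({Conc(A) : A ∈ E})`. -/
theorem statement5 {L : Type} (AS : ArgSystem L) (K : KB L) (pre : Arg L → Arg L → Prop)
    (𝒜 : Set (Arg L))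
    (hcase :
      (𝒜 = ArgsSAF AS K ∧ WellDefinedSAF AS K) ∨
      (𝒜 = ArgsCSAF AS K ∧ WellDefinedCSAF AS K))
    (hreas : Reasonable AS K pre)
    (E : Set (Arg L))
    (hE : Complete 𝒜 (CFwrt (attacks AS K)) (defeats AS K (sprec pre)) E) :
    Arg.conc '' E = {φ | ClRs AS (Arg.conc '' E) φ} := by
  classical
  have hAarg : ∀ A ∈ 𝒜, IsArg AS K A := by
    rcases hcase with ⟨rfl, _⟩ | ⟨rfl, _⟩
    · exact fun A hA => hA
    · exact fun A hA => hA.1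
  apply Set.Subset.antisymm
  · intro φ hφ
    exact ClRs.base hφ
  · intro φ hφ
    simp only [Set.mem_setOf_eq] at hφ
    induction hφ with
    | base h => exact h
    | @step r hr hants ih =>
      obtain ⟨l, hmap, hl⟩ := list_choice (xs := r.ants) (Q := fun a => a ∈ E)
        (fun ψ hψ => by obtain ⟨A, hAE, hAc⟩ := ih ψ hψ; exact ⟨A, hAc, hAE⟩)
      have hBarg : IsArg AS K (Arg.app l r) :=
        .app (fun a ha => hAarg a (hE.1.1 (hl a ha))) (Or.inl hr) hmap
      have hB𝒜 : Arg.app l r ∈ 𝒜 := by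
        rcases hcase with ⟨rfl, _⟩ | ⟨rfl, hwd⟩
        · exact hBarg
        · refine ⟨hBarg, ?_⟩
          have hccW := extension_premises_ccons AS K pre hwd hreas E hE
          refine ccons_mono ?_ hccW
          intro χ hχ
          obtain ⟨a, ha, hχa⟩ := mem_premisesL.mp hχ
          exact ⟨a, hl a ha, hχa⟩
      have hacc : Acceptable 𝒜 (defeats AS K (sprec pre)) E (Arg.app l r) := by
        intro C hC hdef
        obtain ⟨B', hd⟩ := hdef
        have hatt : attacksOn AS K C (Arg.app l r) B' := by
          rcases hd with h | ⟨⟨h, _⟩, _⟩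
          · exact prefIndepOn_attacksOn h
          · exact h
        have hsub : B' ∈ (Arg.app l r).subs := attacksOn_sub hatt
        have hsubs : (Arg.app l r).subs = Arg.subsL l ∪ {Arg.app l r} := rfl
        rw [hsubs] at hsub
        rcases (Set.mem_union _ _ _).mp hsub with hsub' | hsub'
        · obtain ⟨a, ha, hBa⟩ := mem_subsL.mp hsub'
          have hdefa : defeats AS K (sprec pre) C a := by
            rcases hd with h | ⟨⟨h1, h2⟩, h3⟩
            · exact ⟨B', Or.inl (prefIndepOn_transfer h hBa)⟩
            · refine ⟨B', Or.inr ⟨⟨attacksOn_transfer h1 hBa, ?_⟩, h3⟩⟩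
              intro hpi
              exact h2 (prefIndepOn_transfer hpi ((hsubs ▸ hsub : _) ))
          exact hE.1.2.2 a (hl a ha) C hC hdefa
        · exfalso
          have hB'B : B' = Arg.app l r := by simpa using hsub'
          subst hB'B
          rcases hatt with ⟨_, r', hrd, htop, _⟩ | ⟨_, r', hrd, htop, _⟩ |
            ⟨_, ψ, _, heq, _⟩
          · have hrr : r' = r := by
              simp [Arg.topRule] at htop
              exact htop.symm
            subst hrr
            have : r' ∈ AS.Rs ∩ AS.Rd := ⟨hr, hrd⟩
            rw [AS.hdisj] at this
            exact this
          · have hrr : r' = r := by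
              simp [Arg.topRule] at htop
              exact htop.symm
            subst hrr
            have : r' ∈ AS.Rs ∩ AS.Rd := ⟨hr, hrd⟩
            rw [AS.hdisj] at this
            exact this
          · cases heq
      exact ⟨Arg.app l r, hE.2 _ hB𝒜 hacc, rfl⟩

end ASPIC
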